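/- If μᵢ ≥ 0 for all i, then ξ = (n/2)·log(1 + (1/(n·σ̄²))·Σᵢ (μᵢ - μ̄)²) ≤ η = (n/2)·log(1 + (n-1)·(μ̄/σ̄)²). -/

import Mathlib

open Real Finset

/-- Proposition 1: if all μᵢ ≥ 0 then
ξ = (n/2)·log(1 + (1/(nσ̄²))Σᵢ(μᵢ-μ̄)²) ≤ η = (n/2)·log(1 + (n-1)(μ̄/σ̄)²). -/
theorem xi_le_eta (n : ℕ) (hn : 1 ≤ n) (μ : Fin n → ℝ) (hμ : ∀ i, 0 ≤ μ i)
    (σbar : ℝ) (hσ : 0 < σbar) :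
    let μbar : ℝ := (1 / n) * ∑ i, μ i
    let ξ : ℝ := ((n : ℝ) / 2) * Real.log (1 + (1 / (n * σbar^2)) * ∑ i, (μ i - μbar)^2)
    let η : ℝ := ((n : ℝ) / 2) * Real.log (1 + ((n : ℝ) - 1) * (μbar / σbar)^2)
    ξ ≤ η := by
  intro μbar ξ η
  have hn0 : (0:ℝ) < n := by exact_mod_cast hn
  set S : ℝ := ∑ i, μ i with hSdef
  have hS0 : 0 ≤ S := Finset.sum_nonneg fun i _ => hμ i
  have hμbar : (n:ℝ) * μbar = S := by
    simp only [μbar]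
    field_simp
    exact hSdef.symm
  have hsum_sq : ∑ i, (μ i)^2 ≤ S^2 := by
    calc ∑ i, (μ i)^2 ≤ ∑ i, μ i * S := by
          refine Finset.sum_le_sum fun i _ => ?_
          have hle : μ i ≤ S := Finset.single_le_sum (fun j _ => hμ j) (Finset.mem_univ i)
          nlinarith [hμ i]
      _ = S * S := by rw [← Finset.sum_mul]
      _ = S^2 := by ring
  have hexp : ∑ i, (μ i - μbar)^2 = (∑ i, (μ i)^2) - (n:ℝ) * μbar^2 := by
    have : ∀ i, (μ i - μbar)^2 = (μ i)^2 - 2*μbar*(μ i) + μbar^2 := fun i => by ring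
    simp only [this, Finset.sum_add_distrib, Finset.sum_sub_distrib, ← Finset.mul_sum,
      Finset.sum_const, Finset.card_univ, Fintype.card_fin, nsmul_eq_mul]
    nlinarith [hμbar]
  have key : ∑ i, (μ i - μbar)^2 ≤ ((n:ℝ) - 1) * n * μbar^2 := by
    nlinarith [hμbar, hsum_sq, hexp]
  have hsumnn : 0 ≤ ∑ i, (μ i - μbar)^2 := Finset.sum_nonneg fun i _ => sq_nonneg _
  have hσ2 : (0:ℝ) < σbar^2 := by positivity
  have hnσ : (0:ℝ) < n * σbar^2 := by positivity
  have harg : 1 + (1 / (n * σbar^2)) * ∑ i, (μ i - μbar)^2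
      ≤ 1 + ((n : ℝ) - 1) * (μbar / σbar)^2 := by
    have h : (1 / (n * σbar^2)) * ∑ i, (μ i - μbar)^2 ≤ ((n : ℝ) - 1) * (μbar / σbar)^2 := by
      rw [div_pow, one_div, inv_mul_le_iff₀ hnσ]
      calc ∑ i, (μ i - μbar)^2 ≤ ((n:ℝ) - 1) * n * μbar^2 := key
        _ = ((n:ℝ) - 1) * (μbar ^ 2 / σbar ^ 2) * ((n:ℝ) * σbar ^ 2) := by
            field_simp
        _ = (n:ℝ) * σbar ^ 2 * (((n:ℝ) - 1) * (μbar ^ 2 / σbar ^ 2)) := by ring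
    linarith
  have hpos : (0:ℝ) < 1 + (1 / (n * σbar^2)) * ∑ i, (μ i - μbar)^2 := by
    have : 0 ≤ (1 / (n * σbar^2)) * ∑ i, (μ i - μbar)^2 := by positivity
    linarith
  have hlog := Real.log_le_log hpos harg
  have hn2 : (0:ℝ) ≤ (n:ℝ)/2 := by positivity
  exact mul_le_mul_of_nonneg_left hlog hn2
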